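/- Let Aᵢ = [a₁,…,a_{2i}] be the recursively defined matrix as above. Then the sum of the first 2i−1 columns, Σ_{j=1}^{2i−1} aⱼ, equals the standard basis vector (0,…,0,1)ᵀ ∈ F^{2i}. -/
import Mathlib


def A1 (F : Type*) [Field F] : Matrix (Fin 2) (Fin 2) F := !![0, -1; 1, 0]
def B1 (F : Type*) [Field F] : Matrix (Fin 2) (Fin 2) F := !![1, -1; -1, 1]

/-- `Bmat F i` is the horizontal concatenation of `i` copies of `B1`. -/
def Bmat (F : Type*) [Field F] (i : ℕ) : Matrix (Fin 2) (Fin (2 * i)) F :=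
  fun a b => B1 F a ⟨b.val % 2, Nat.mod_lt _ (by norm_num)⟩

def Amat (F : Type*) [Field F] : (i : ℕ) → Matrix (Fin (2 * i)) (Fin (2 * i)) F
  | 0 => 0
  | 1 => Matrix.reindex (finCongr (by norm_num)) (finCongr (by norm_num)) (A1 F)
  | (i + 2) =>
      Matrix.reindex (finSumFinEquiv.trans (finCongr (by omega)))
        (finSumFinEquiv.trans (finCongr (by omega)))
        (Matrix.fromBlocks (A1 F) (Bmat F (i + 1)) (-(Bmat F (i + 1)).transpose) (Amat F (i + 1)))

lemma Bsum (F : Type*) [Field F] (k : ℕ) (a : Fin 2) :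
    (∑ m ∈ Finset.range (2 * k + 1), B1 F a ⟨m % 2, Nat.mod_lt _ (by norm_num)⟩)
      = if a = 0 then 1 else -1 := by
  induction k with
  | zero =>
    simp only [Nat.mul_zero, Nat.zero_add, Finset.sum_range_one]
    fin_cases a <;> simp [B1]
  | succ k ih =>
    rw [show (2 * (k+1) + 1) = (2*k+1)+1+1 from by ring]
    rw [Finset.sum_range_succ, Finset.sum_range_succ, ih]
    have h1 : (2 * k + 1) % 2 = 1 := by omega
    have h2 : (2 * k + 1 + 1) % 2 = 0 := by omega
    simp only [h1, h2]
    fin_cases a <;> simp [B1]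

lemma Bsum' (F : Type*) [Field F] (k : ℕ) (a : Fin 2) :
    (∑ b : Fin (2 * (k+1)), if (b : ℕ) < 2 * (k + 1) - 1 then Bmat F (k+1) a b else 0)
      = if a = 0 then 1 else -1 := by
  simp only [Bmat]
  rw [Fin.sum_univ_eq_sum_range (fun m => if m < 2 * (k + 1) - 1 then B1 F a ⟨m % 2, Nat.mod_lt _ (by norm_num)⟩ else 0)]
  rw [show (2 * (k+1)) = (2*k+1)+1 from by ring]
  simp only [Nat.add_sub_cancel]
  rw [Finset.sum_range_succ]
  rw [if_neg (lt_irrefl _), add_zero]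
  rw [← Bsum F k a]
  apply Finset.sum_congr rfl
  intro m hm
  rw [if_pos (by simp at hm; omega)]

lemma main_aux (F : Type*) [Field F] (i : ℕ) (r : Fin (2 * (i+1))) :
    (∑ j ∈ Finset.univ.filter (fun j : Fin (2 * (i+1)) => (j : ℕ) < 2 * (i+1) - 1),
        Amat F (i+1) r j) = (if (r : ℕ) = 2 * (i+1) - 1 then (1 : F) else 0) := by
  induction i with
  | zero =>
    fin_cases r <;> simp [Amat, A1, Finset.sum_filter, Fin.sum_univ_two, finCongr]
  | succ i ih =>
    rw [Finset.sum_filter]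
    set e : (Fin 2 ⊕ Fin (2 * (i+1))) ≃ Fin (2 * (i+1+1)) :=
      (finSumFinEquiv.trans (finCongr (by omega))) with he
    rw [← e.sum_comp (fun j => if (j : ℕ) < 2 * (i+1+1) - 1 then Amat F (i+1+1) r j else 0)]
    have hA : ∀ x y, Amat F (i+1+1) (e x) (e y) =
        Matrix.fromBlocks (A1 F) (Bmat F (i + 1)) (-(Bmat F (i + 1)).transpose) (Amat F (i + 1)) x y := by
      intro x y
      show Matrix.reindex e e _ (e x) (e y) = _
      simp [Matrix.reindex_apply]
    have heval : ∀ a : Fin 2, ((e (Sum.inl a) : ℕ)) = (a : ℕ) := by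
      intro a; simp [he, finCongr]
    have hevar : ∀ c : Fin (2 * (i+1)), ((e (Sum.inr c) : ℕ)) = 2 + (c : ℕ) := by
      intro c; simp [he, finCongr, finSumFinEquiv, Nat.add_comm]
    obtain ⟨x, rfl⟩ := e.surjective r
    rw [Fintype.sum_sum_type]
    have h1 : ∀ a' : Fin 2, ((e (Sum.inl a') : ℕ) < 2 * (i+1+1) - 1) := by
      intro a'; rw [heval]; omega
    have h2 : ∀ b : Fin (2 * (i+1)), ((e (Sum.inr b) : ℕ) < 2 * (i+1+1) - 1) ↔ ((b : ℕ) < 2 * (i+1) - 1) := by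
      intro b; rw [hevar]; omega
    cases x with
    | inl a =>
      simp only [hA, h2, if_pos (h1 _)]
      simp only [Matrix.fromBlocks_apply₁₁, Matrix.fromBlocks_apply₁₂]
      rw [Fin.sum_univ_two, Bsum' F i a, heval]
      have hne : ¬ ((a : ℕ) = 2 * (i+1+1) - 1) := by omega
      rw [if_neg hne]
      fin_cases a <;> simp [A1]
    | inr c =>
      simp only [hA, h2, if_pos (h1 _)]
      simp only [Matrix.fromBlocks_apply₂₁, Matrix.fromBlocks_apply₂₂]
      rw [Fin.sum_univ_two]
      have ihc := ih c
      rw [Finset.sum_filter] at ihc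
      rw [ihc, hevar]
      have hiff : (2 + (c:ℕ) = 2 * (i+1+1) - 1) ↔ ((c:ℕ) = 2 * (i+1) - 1) := by omega
      rw [if_congr hiff rfl rfl]
      simp only [Matrix.transpose_apply, Matrix.neg_apply, Bmat]
      have hc : (⟨(c:ℕ) % 2, Nat.mod_lt _ (by norm_num)⟩ : Fin 2) = 0 ∨
          (⟨(c:ℕ) % 2, Nat.mod_lt _ (by norm_num)⟩ : Fin 2) = 1 := by
        rcases Nat.mod_two_eq_zero_or_one (c:ℕ) with h | h
        · left; exact Fin.ext h
        · right; exact Fin.ext h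
      rcases hc with h | h <;> rw [h] <;> simp [B1]

theorem Amat_col_sum (F : Type*) [Field F] (i : ℕ) (hi : 1 ≤ i) (r : Fin (2 * i)) :
    (∑ j ∈ Finset.univ.filter (fun j : Fin (2 * i) => (j : ℕ) < 2 * i - 1),
        Amat F i r j) = (if (r : ℕ) = 2 * i - 1 then (1 : F) else 0) := by
  cases i with
  | zero => omega
  | succ k => exact main_aux F k r
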